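/- For all integers p₁, p₂, all binary vectors x₁, x₂ : Fin n → ℤ (every entry 0 or 1) and all z₁, z₂ : Fin n → ℤ, the matrix identity XP_N(p₁|x₁|z₁) * XP_N(p₂|x₂|z₂) = XP_N(p₁+p₂ | x₁+x₂ | z₁+z₂) * D_N(2 • (x₂ * z₁)) holds, where vector sums and the product x₂ * z₁ are taken componentwise in ℤ. -/

import Mathlib

open Matrix

/-- `ω = exp(πi/N)`. -/
noncomputable def omN (N : ℕ) : ℂ := Complex.exp (Real.pi * Complex.I / N)

/-- The Pauli X matrix. -/
def Xm : Matrix (Fin 2) (Fin 2) ℂ := !![0, 1; 1, 0]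

/-- The precision-`N` phase matrix `P = diag(1, ω²)`. -/
noncomputable def Pm (N : ℕ) : Matrix (Fin 2) (Fin 2) ℂ := !![1, 0; 0, (omN N) ^ 2]

/-- The precision-`N` XP operator `XP_N(p|x|z)` on `n` qubits, the matrix indexed by bit
strings whose `(f, e)` entry is `ω^p * ∏ i, (X^(x i) * P^(z i)) (f i) (e i)`. -/
noncomputable def XP (N n : ℕ) (p : ℤ) (x z : Fin n → ℤ) :
    Matrix (Fin n → Fin 2) (Fin n → Fin 2) ℂ :=
  Matrix.of fun f e => (omN N) ^ p * ∏ i, ((Xm ^ (x i)) * (Pm N) ^ (z i)) (f i) (e i)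

/-- The antisymmetric operator `D_N(z) = XP_N(∑ i, z i | 0 | -z)`. -/
noncomputable def DN (N n : ℕ) (z : Fin n → ℤ) :
    Matrix (Fin n → Fin 2) (Fin n → Fin 2) ℂ :=
  XP N n (∑ i, z i) 0 (-z)

/-- A vector is binary if every entry is 0 or 1. -/
def IsBinary {n : ℕ} (x : Fin n → ℤ) : Prop := ∀ i, x i = 0 ∨ x i = 1


lemma omN_ne_zero (N : ℕ) : omN N ≠ 0 := Complex.exp_ne_zero _

lemma omN_zpow_add (N : ℕ) (a b : ℤ) : omN N ^ (a + b) = omN N ^ a * omN N ^ b :=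
  zpow_add₀ (omN_ne_zero N) a b

lemma detX : IsUnit (Xm).det := by
  simp [Xm, Matrix.det_fin_two_of]

lemma detP (N : ℕ) : IsUnit (Pm N).det := by
  simp [Pm, Matrix.det_fin_two_of, isUnit_iff_ne_zero, omN_ne_zero]

lemma Pm_inv (N : ℕ) : (Pm N)⁻¹ = !![1, 0; 0, (omN N) ^ (-2 : ℤ)] := by
  apply Matrix.inv_eq_right_inv
  have h2 : (omN N) ^ (2:ℤ) * ((omN N) ^ (2:ℤ))⁻¹ = 1 :=
    mul_inv_cancel₀ (zpow_ne_zero _ (omN_ne_zero N))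
  ext i j
  fin_cases i <;> fin_cases j <;> simp [Pm, Matrix.mul_apply, Fin.sum_univ_two]
  exact h2

lemma Pm_zpow (N : ℕ) (b : ℤ) : Pm N ^ b = !![1, 0; 0, (omN N) ^ (2 * b)] := by
  induction b using Int.induction_on with
  | zero =>
      ext i j
      fin_cases i <;> fin_cases j <;> simp [Matrix.one_apply]
  | succ k ih =>
      rw [Matrix.zpow_add_one (detP N), ih]
      have h : omN N ^ (2 * (k:ℤ)) * omN N ^ (2 : ℤ) = omN N ^ (2 * ((k:ℤ) + 1)) := by
        rw [← omN_zpow_add]; ring_nf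
      ext i j
      fin_cases i <;> fin_cases j <;> simp [Pm, Matrix.mul_apply, Fin.sum_univ_two]
      rw [← h]
      norm_num
  | pred k ih =>
      rw [show (-(k:ℤ) - 1) = (-k + -1) by ring, Matrix.zpow_add (detP N),
        Matrix.zpow_neg_one, ih, Pm_inv]
      have h : omN N ^ (2 * (-(k:ℤ))) * omN N ^ (-2 : ℤ) = omN N ^ (2 * (-(k:ℤ) + -1)) := by
        rw [← omN_zpow_add]; ring_nf
      ext i j
      fin_cases i <;> fin_cases j <;> simp [Matrix.mul_apply, Fin.sum_univ_two]
      rw [← h]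
      simp [_root_.zpow_neg]

lemma commP (N : ℕ) (b : ℤ) :
    Pm N ^ b * Xm = (omN N) ^ (2 * b) • (Xm * Pm N ^ (-b)) := by
  rw [Pm_zpow, Pm_zpow, Xm]
  have h : omN N ^ (2 * b) * omN N ^ (2 * (-b)) = 1 := by
    rw [← omN_zpow_add, show 2 * b + 2 * (-b) = 0 by ring, zpow_zero]
  have h2 : (1:ℂ) = omN N ^ (2 * b) * (omN N ^ (2 * b))⁻¹ :=
    (mul_inv_cancel₀ (zpow_ne_zero _ (omN_ne_zero N))).symm
  ext i j
  fin_cases i <;> fin_cases j <;>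
    simp [Matrix.mul_apply, Fin.sum_univ_two, Matrix.smul_apply, h, ← h2]

lemma qubit (N : ℕ) (a b c d : ℤ) (hc : c = 0 ∨ c = 1) :
    (Xm ^ a * Pm N ^ b) * (Xm ^ c * Pm N ^ d) =
      (omN N) ^ (2 * (c * b)) •
        ((Xm ^ (a + c) * Pm N ^ (b + d)) * (Xm ^ (0:ℤ) * Pm N ^ (-(2 * (c * b))))) := by
  rcases hc with hc | hc <;> subst hc
  · simp only [mul_zero, zero_mul, neg_zero, zpow_zero, add_zero, one_smul, mul_one,
      Matrix.zpow_add (detP N) b d]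
    noncomm_ring
  · simp only [one_mul, zpow_one]
    have key : Pm N ^ b * Xm = (omN N) ^ (2 * b) • (Xm * Pm N ^ (-b)) := commP N b
    calc (Xm ^ a * Pm N ^ b) * (Xm * Pm N ^ d)
        = Xm ^ a * (Pm N ^ b * Xm) * Pm N ^ d := by noncomm_ring
      _ = (omN N) ^ (2 * b) • (Xm ^ a * Xm * (Pm N ^ (-b) * Pm N ^ d)) := by
          rw [key]; simp only [Matrix.mul_smul, Matrix.smul_mul]; noncomm_ring
      _ = (omN N) ^ (2 * b) •
          ((Xm ^ (a + 1) * Pm N ^ (b + d)) * (Xm ^ (0:ℤ) * Pm N ^ (-(2 * b)))) := by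
          congr 1
          rw [Matrix.zpow_add detX a 1, zpow_one, zpow_zero, one_mul,
            ← Matrix.zpow_add (detP N) (-b) d,
            show (-b + d) = (b + d) + -(2*b) by ring,
            Matrix.zpow_add (detP N) (b+d) (-(2*b))]
          noncomm_ring

lemma entry_mul {n : ℕ} (M₁ M₂ : Fin n → Matrix (Fin 2) (Fin 2) ℂ) (f e : Fin n → Fin 2) :
    ∑ g : Fin n → Fin 2, (∏ i, M₁ i (f i) (g i)) * ∏ i, M₂ i (g i) (e i)
      = ∏ i, (M₁ i * M₂ i) (f i) (e i) := by
  simp_rw [← Finset.prod_mul_distrib, Matrix.mul_apply]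
  rw [Fintype.prod_sum]

lemma prod_omN_zpow (N : ℕ) {n : ℕ} (c : Fin n → ℤ) :
    ∏ i, (omN N) ^ (c i) = (omN N) ^ (∑ i, c i) := by
  classical
  induction (Finset.univ : Finset (Fin n)) using Finset.induction_on with
  | empty => simp
  | insert _ _ h ih => rw [Finset.prod_insert h, Finset.sum_insert h, omN_zpow_add, ih]

/-- **Multiplication rule for XP operators** (MUL):
`XP_N(p₁|x₁|z₁) ⬝ XP_N(p₂|x₂|z₂) = XP_N(p₁+p₂|x₁+x₂|z₁+z₂) ⬝ D_N(2 x₂ z₁)`. -/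
theorem XP_mul (N n : ℕ) (hN : 2 ≤ N) (hn : 1 ≤ n) (p₁ p₂ : ℤ) (x₁ x₂ z₁ z₂ : Fin n → ℤ)
    (hx₁ : IsBinary x₁) (hx₂ : IsBinary x₂) :
    XP N n p₁ x₁ z₁ * XP N n p₂ x₂ z₂ =
      XP N n (p₁ + p₂) (x₁ + x₂) (z₁ + z₂) * DN N n (2 • (x₂ * z₁)) := by
  ext f e
  rw [Matrix.mul_apply, Matrix.mul_apply]
  simp only [XP, DN, Matrix.of_apply, Pi.zero_apply, Pi.neg_apply, Pi.add_apply,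
    Pi.smul_apply, Pi.mul_apply, smul_eq_mul, nsmul_eq_mul, Nat.cast_ofNat, Pi.ofNat_apply]
  simp_rw [mul_mul_mul_comm, ← Finset.mul_sum, entry_mul]
  have hAB : ∀ i, ((Xm ^ (x₁ i) * Pm N ^ (z₁ i)) * (Xm ^ (x₂ i) * Pm N ^ (z₂ i))) (f i) (e i)
      = (omN N) ^ (2 * (x₂ i * z₁ i)) *
        (((Xm ^ (x₁ i + x₂ i) * Pm N ^ (z₁ i + z₂ i)) *
          (Xm ^ (0:ℤ) * Pm N ^ (-(2 * (x₂ i * z₁ i))))) (f i) (e i)) := by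
    intro i
    rw [qubit N (x₁ i) (z₁ i) (x₂ i) (z₂ i) (hx₂ i)]
    simp [Matrix.smul_apply]
  rw [Finset.prod_congr rfl (fun i _ => hAB i), Finset.prod_mul_distrib, prod_omN_zpow,
    ← omN_zpow_add]
  rw [show (∑ i, 2 * (x₂ i * z₁ i)) = 2 * ∑ i, x₂ i * z₁ i from by rw [Finset.mul_sum],
    mul_assoc]
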